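/- Let B generate a semigroup with ‖S_B(t)‖ ≤ e^{-λ_B t}, let g : V × V → V satisfy ‖g(x,y)‖ ≤ C₁(‖x‖+‖y‖) + C₂ with λ_B > C₁, and let Y^ε be a continuous mild solution of dY^ε = (1/ε) B Y^ε dt + (1/ε) g(X^ε(t), Y^ε(t)) dt + dω_{2,ε}(t) on [0,T] with Y^ε(0) = Y₀. Assume sup_{t∈[0,T]}‖X^ε(t)‖ ≤ M and sup_{t∈[0,T]}‖Z^ε(θ_t ω₂)‖ ≤ N, where Z^ε is the stationary Ornstein–Uhlenbeck process associated with (1/ε)B and ω_{2,ε}. Then sup_{t∈[0,T]} ‖Y^ε(t)‖ ≤ C(1 + M + ‖Y₀‖ + N) where C depends only on λ_B, C₁, C₂ but not on ε. -/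

import Mathlib

open MeasureTheory

lemma exp_integral_le_aux (a ε t : ℝ) (ha : 0 < a) (hε : 0 < ε) (ht : 0 ≤ t) :
    ∫ r in (0:ℝ)..t, Real.exp (-(a / ε) * (t - r)) ≤ ε / a := by
  have key : ∀ r : ℝ, HasDerivAt (fun r => (ε / a) * Real.exp (-(a / ε) * (t - r)))
      (Real.exp (-(a / ε) * (t - r))) r := by
    intro r
    have h1 : HasDerivAt (fun r : ℝ => -(a / ε) * (t - r)) (a / ε) r := by
      have := ((hasDerivAt_id r).const_sub t).const_mul (-(a / ε))
      simpa using this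
    have h2 := (h1.exp).const_mul (ε / a)
    refine h2.congr_deriv ?_
    field_simp
  have hint : IntervalIntegrable (fun r => Real.exp (-(a / ε) * (t - r))) volume 0 t :=
    (Real.continuous_exp.comp (by continuity)).intervalIntegrable 0 t
  rw [intervalIntegral.integral_eq_sub_of_hasDerivAt (fun r _ => key r) hint]
  have h3 : Real.exp (-(a / ε) * (t - t)) = 1 := by simp
  rw [h3]
  have h4 : 0 ≤ (ε / a) * Real.exp (-(a / ε) * (t - 0)) :=
    mul_nonneg (by positivity) (Real.exp_pos _).le
  linarith

theorem stmt_9 (lamB C₁ C₂ : ℝ) (hC₁ : 0 < C₁) (hlam : C₁ < lamB) (hC₂ : 0 ≤ C₂) :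
    ∃ C : ℝ, 0 < C ∧
      ∀ (V : Type) [NormedAddCommGroup V] [NormedSpace ℝ V] [CompleteSpace V],
      ∀ (ε T : ℝ), 0 < ε → 0 < T →
      ∀ (S : ℝ → V →L[ℝ] V), (∀ t : ℝ, 0 ≤ t → ‖S t‖ ≤ Real.exp (-(lamB / ε) * t)) →
      ∀ (g : V → V → V), (∀ x y : V, ‖g x y‖ ≤ C₁ * (‖x‖ + ‖y‖) + C₂) →
      Continuous (fun p : V × V => g p.1 p.2) →
      ∀ (X Y Z : ℝ → V) (Y₀ : V), Y 0 = Y₀ →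
      ContinuousOn X (Set.Icc 0 T) → ContinuousOn Y (Set.Icc 0 T) →
      ∀ (M N : ℝ), 0 ≤ M → 0 ≤ N →
      (∀ t ∈ Set.Icc (0:ℝ) T, ‖X t‖ ≤ M) →
      (∀ t ∈ Set.Icc (0:ℝ) T, ‖Z t‖ ≤ N) →
      (∀ t ∈ Set.Icc (0:ℝ) T,
        Y t = S t (Y₀ - Z 0) + Z t + ε⁻¹ • ∫ r in (0:ℝ)..t, S (t - r) (g (X r) (Y r))) →
      ∀ t ∈ Set.Icc (0:ℝ) T, ‖Y t‖ ≤ C * (1 + M + ‖Y₀‖ + N) := by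
  have hlB : 0 < lamB := hC₁.trans hlam
  refine ⟨(lamB / (lamB - C₁)) * (2 + (C₁ + C₂) / lamB),
    mul_pos (div_pos hlB (by linarith)) (by positivity), ?_⟩
  intro V _ _ _ ε T hε hT S hS g hg hgc X Y Z Y₀ hY0 hX hYc M N hM hN hXb hZb hmild t ht
  obtain ⟨t₀, ht₀, hmax⟩ :=
    isCompact_Icc.exists_isMaxOn (Set.nonempty_Icc.mpr hT.le) hYc.norm
  set K := ‖Y t₀‖ with hKdef
  have hKmax : ∀ s ∈ Set.Icc (0:ℝ) T, ‖Y s‖ ≤ K := fun s hs => hmax hs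
  have hK0 : 0 ≤ K := norm_nonneg _
  have h0T : (0:ℝ) ∈ Set.Icc (0:ℝ) T := ⟨le_refl 0, hT.le⟩
  have hZ0 : ‖Z 0‖ ≤ N := hZb 0 h0T
  have ht₀0 : 0 ≤ t₀ := ht₀.1
  set G := C₁ * (M + K) + C₂ with hGdef
  have hG0 : 0 ≤ G := by positivity
  -- key bound on K
  have hK : K ≤ ‖Y₀‖ + 2 * N + G / lamB := by
    have heq := hmild t₀ ht₀
    have hterm1 : ‖S t₀ (Y₀ - Z 0)‖ ≤ ‖Y₀‖ + N := by
      calc ‖S t₀ (Y₀ - Z 0)‖ ≤ ‖S t₀‖ * ‖Y₀ - Z 0‖ := (S t₀).le_opNorm _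
        _ ≤ 1 * (‖Y₀‖ + N) := by
            apply mul_le_mul
            · exact (hS t₀ ht₀0).trans (Real.exp_le_one_iff.mpr (by
                have : 0 ≤ lamB / ε * t₀ := by positivity
                linarith))
            · exact (norm_sub_le _ _).trans (by linarith)
            · exact norm_nonneg _
            · norm_num
        _ = ‖Y₀‖ + N := one_mul _
    have hterm2 : ‖Z t₀‖ ≤ N := hZb t₀ ht₀
    have hIbound : ‖∫ r in (0:ℝ)..t₀, S (t₀ - r) (g (X r) (Y r))‖ ≤ (ε / lamB) * G := by
      have hbound : IntervalIntegrable (fun r => Real.exp (-(lamB / ε) * (t₀ - r)) * G)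
          volume 0 t₀ :=
        ((Real.continuous_exp.comp (continuous_const.mul (continuous_const.sub continuous_id))).mul
          continuous_const).intervalIntegrable 0 t₀
      have hae : ∀ᵐ r ∂volume.restrict (Set.uIoc (0:ℝ) t₀),
          ‖S (t₀ - r) (g (X r) (Y r))‖ ≤ Real.exp (-(lamB / ε) * (t₀ - r)) * G := by
        refine ae_restrict_of_forall_mem measurableSet_uIoc (fun r hr => ?_)
        rw [Set.uIoc_of_le ht₀0] at hr
        have hrIcc : r ∈ Set.Icc (0:ℝ) T := ⟨hr.1.le, hr.2.trans ht₀.2⟩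
        have hgb : ‖g (X r) (Y r)‖ ≤ G := by
          have := hg (X r) (Y r)
          have hx := hXb r hrIcc
          have hy := hKmax r hrIcc
          nlinarith [hC₁.le]
        calc ‖S (t₀ - r) (g (X r) (Y r))‖ ≤ ‖S (t₀ - r)‖ * ‖g (X r) (Y r)‖ :=
              (S _).le_opNorm _
          _ ≤ Real.exp (-(lamB / ε) * (t₀ - r)) * G := by
              apply mul_le_mul (hS _ (by linarith [hr.2])) hgb (norm_nonneg _)
                (Real.exp_pos _).le
      have h1 := intervalIntegral.norm_integral_le_abs_of_norm_le hae hbound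
      have h2 : (∫ r in (0:ℝ)..t₀, Real.exp (-(lamB / ε) * (t₀ - r)) * G)
          = (∫ r in (0:ℝ)..t₀, Real.exp (-(lamB / ε) * (t₀ - r))) * G := by
        rw [intervalIntegral.integral_mul_const]
      have h3 : 0 ≤ ∫ r in (0:ℝ)..t₀, Real.exp (-(lamB / ε) * (t₀ - r)) :=
        intervalIntegral.integral_nonneg ht₀0 (fun r _ => (Real.exp_pos _).le)
      have h4 := exp_integral_le_aux lamB ε t₀ hlB hε ht₀0
      rw [h2] at h1
      have h5 : |(∫ r in (0:ℝ)..t₀, Real.exp (-(lamB / ε) * (t₀ - r))) * G|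
          = (∫ r in (0:ℝ)..t₀, Real.exp (-(lamB / ε) * (t₀ - r))) * G := by
        rw [abs_of_nonneg (mul_nonneg h3 hG0)]
      rw [h5] at h1
      exact h1.trans (mul_le_mul_of_nonneg_right h4 hG0)
    have hterm3 : ‖ε⁻¹ • ∫ r in (0:ℝ)..t₀, S (t₀ - r) (g (X r) (Y r))‖ ≤ G / lamB := by
      rw [norm_smul, Real.norm_eq_abs, abs_of_nonneg (by positivity : (0:ℝ) ≤ ε⁻¹)]
      calc ε⁻¹ * ‖∫ r in (0:ℝ)..t₀, S (t₀ - r) (g (X r) (Y r))‖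
          ≤ ε⁻¹ * ((ε / lamB) * G) := by
            exact mul_le_mul_of_nonneg_left hIbound (by positivity)
        _ = G / lamB := by field_simp
    calc K = ‖Y t₀‖ := rfl
      _ = ‖S t₀ (Y₀ - Z 0) + Z t₀ + ε⁻¹ • ∫ r in (0:ℝ)..t₀, S (t₀ - r) (g (X r) (Y r))‖ := by
          rw [← heq]
      _ ≤ ‖S t₀ (Y₀ - Z 0) + Z t₀‖ + ‖ε⁻¹ • ∫ r in (0:ℝ)..t₀, S (t₀ - r) (g (X r) (Y r))‖ :=
          norm_add_le _ _
      _ ≤ (‖S t₀ (Y₀ - Z 0)‖ + ‖Z t₀‖) + G / lamB := by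
          exact add_le_add (norm_add_le _ _) hterm3
      _ ≤ ‖Y₀‖ + 2 * N + G / lamB := by linarith
  -- conclude
  have hYt : ‖Y t‖ ≤ K := hKmax t ht
  have hY₀ : 0 ≤ ‖Y₀‖ := norm_nonneg _
  have hKlam : K * (lamB - C₁) ≤ (‖Y₀‖ + 2 * N) * lamB + C₁ * M + C₂ := by
    have := mul_le_mul_of_nonneg_right hK hlB.le
    rw [add_mul, add_mul, div_mul_cancel₀ _ (ne_of_gt hlB)] at this
    nlinarith
  have hfinal : K ≤ (lamB / (lamB - C₁)) * (2 + (C₁ + C₂) / lamB) * (1 + M + ‖Y₀‖ + N) := by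
    rw [div_mul_eq_mul_div, div_mul_eq_mul_div, le_div_iff₀ (by linarith)]
    have hexp : lamB * (2 + (C₁ + C₂) / lamB) = 2 * lamB + C₁ + C₂ := by
      field_simp; ring
    rw [hexp]
    nlinarith [mul_nonneg hlB.le hY₀, mul_nonneg hlB.le hM, mul_nonneg hC₁.le hY₀,
      mul_nonneg hC₁.le hN, mul_nonneg hC₂ hM, mul_nonneg hC₂ hY₀, mul_nonneg hC₂ hN,
      mul_nonneg hlB.le hN]
  exact hYt.trans hfinal
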